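/- Let N ∈ ℕ with N ≥ 1 and d ∈ ℝ, and let a : ℕ → ℝ be the odd-parity QES coefficient sequence for parameters (N, d). Then for every k ≥ 1, a(k+1) = ((−1)^k / ((k+1)!·k!)) · det Q^{(N,k)}(d), where Q^{(N,k)}(d) is the k×k tridiagonal matrix defined in the context. -/

import Mathlib

/-- The k×k tridiagonal matrix `Q^(N,k)(d)` of the odd-parity QES construction:
`Q i i = 2·(i+1)·d`, `Q i (i+1) = (i+1)·(i+2)`, `Q i (i-1) = 2·(N − i)`,
all other entries `0`. -/
def Qmat (N : ℕ) (d : ℝ) (k : ℕ) : Matrix (Fin k) (Fin k) ℝ :=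
  Matrix.of fun i j =>
    if (j : ℕ) = (i : ℕ) then 2 * ((i : ℝ) + 1) * d
    else if (j : ℕ) = (i : ℕ) + 1 then ((i : ℝ) + 1) * ((i : ℝ) + 2)
    else if (j : ℕ) + 1 = (i : ℕ) then 2 * ((N : ℝ) - (i : ℝ))
    else 0

lemma Qmat_submatrix (N : ℕ) (d : ℝ) {k m : ℕ} (f g : Fin k → Fin m)
    (hf : ∀ i, (f i : ℕ) = i) (hg : ∀ j, (g j : ℕ) = j) :
    (Qmat N d m).submatrix f g = Qmat N d k := by
  ext i j
  simp [Qmat, Matrix.submatrix_apply, hf, hg]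

lemma det_Q_rec (N : ℕ) (d : ℝ) (k : ℕ) :
    (Qmat N d (k+2)).det = 2*((k:ℝ)+2)*d * (Qmat N d (k+1)).det
      - 2*((N:ℝ)-((k:ℝ)+1)) * (((k:ℝ)+1)*((k:ℝ)+2)) * (Qmat N d k).det := by
  rw [Matrix.det_succ_row (Qmat N d (k+2)) (Fin.last (k+1))]
  rw [Fin.sum_univ_castSucc, Fin.sum_univ_castSucc]
  have hz : ∀ j : Fin k,
      (-1 : ℝ) ^ ((Fin.last (k+1) : ℕ) + ((j.castSucc.castSucc : Fin (k+2)) : ℕ))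
        * Qmat N d (k+2) (Fin.last (k+1)) j.castSucc.castSucc
        * ((Qmat N d (k+2)).submatrix (Fin.last (k+1)).succAbove
            (j.castSucc.castSucc).succAbove).det = 0 := by
    intro j
    have hj : (j : ℕ) < k := j.isLt
    have : Qmat N d (k+2) (Fin.last (k+1)) j.castSucc.castSucc = 0 := by
      simp only [Qmat, Matrix.of_apply, Fin.coe_castSucc, Fin.val_last]
      rw [if_neg (by omega), if_neg (by omega), if_neg (by omega)]
    rw [this]; ring
  rw [Finset.sum_congr rfl (fun j _ => hz j), Finset.sum_const_zero, zero_add]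
  -- diagonal (last) term
  have h2m : ((Qmat N d (k+2)).submatrix (Fin.last (k+1)).succAbove
      (Fin.last (k+1)).succAbove) = Qmat N d (k+1) :=
    Qmat_submatrix _ _ _ _ (by simp [Fin.succAbove_last]) (by simp [Fin.succAbove_last])
  have h2e : Qmat N d (k+2) (Fin.last (k+1)) (Fin.last (k+1)) = 2*((k:ℝ)+2)*d := by
    simp only [Qmat, Matrix.of_apply, Fin.val_last, if_pos rfl]
    push_cast; ring
  -- subdiagonal term
  have h1e : Qmat N d (k+2) (Fin.last (k+1)) (Fin.last k).castSucc
      = 2*((N:ℝ)-((k:ℝ)+1)) := by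
    simp only [Qmat, Matrix.of_apply, Fin.val_last, Fin.coe_castSucc]
    rw [if_neg (by omega), if_neg (by omega), if_pos trivial]
    push_cast; ring
  have h1m : ((Qmat N d (k+2)).submatrix (Fin.last (k+1)).succAbove
      ((Fin.last k).castSucc).succAbove).det = ((k:ℝ)+1)*((k:ℝ)+2) * (Qmat N d k).det := by
    set M := (Qmat N d (k+2)).submatrix (Fin.last (k+1)).succAbove
      ((Fin.last k).castSucc).succAbove with hM
    rw [Matrix.det_succ_column M (Fin.last k), Fin.sum_univ_castSucc]
    have hcol : ∀ i : Fin (k+1), (((Fin.last k).castSucc.succAbove (Fin.last k)) : ℕ) = k+1 := by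
      intro i
      rw [Fin.succAbove_of_le_castSucc _ _ (by simp [Fin.le_def])]
      simp
    have hz2 : ∀ i : Fin k,
        (-1 : ℝ) ^ (((i.castSucc : Fin (k+1)) : ℕ) + ((Fin.last k : Fin (k+1)) : ℕ))
          * M i.castSucc (Fin.last k)
          * (M.submatrix (i.castSucc).succAbove (Fin.last k).succAbove).det = 0 := by
      intro i
      have hi : (i : ℕ) < k := i.isLt
      have hrow : (((Fin.last (k+1)).succAbove i.castSucc) : ℕ) = i := by
        simp [Fin.succAbove_last]
      have : M i.castSucc (Fin.last k) = 0 := by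
        rw [hM, Matrix.submatrix_apply]
        simp only [Qmat, Matrix.of_apply, hrow, hcol i.castSucc]
        rw [if_neg (by omega), if_neg (by omega), if_neg (by omega)]
      rw [this]; ring
    rw [Finset.sum_congr rfl (fun i _ => hz2 i), Finset.sum_const_zero, zero_add]
    have he : M (Fin.last k) (Fin.last k) = ((k:ℝ)+1)*((k:ℝ)+2) := by
      rw [hM, Matrix.submatrix_apply]
      have hrow : (((Fin.last (k+1)).succAbove (Fin.last k)) : ℕ) = k := by
        simp [Fin.succAbove_last]
      simp only [Qmat, Matrix.of_apply, hrow, hcol (Fin.last k)]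
      rw [if_neg (by omega), if_pos trivial]
    have hmm : M.submatrix (Fin.last k).succAbove (Fin.last k).succAbove = Qmat N d k := by
      rw [hM, Matrix.submatrix_submatrix]
      refine Qmat_submatrix _ _ _ _ (fun i => ?_) (fun j => ?_)
      · simp [Function.comp, Fin.succAbove_last]
      · simp only [Function.comp, Fin.succAbove_last]
        rw [Fin.succAbove_of_castSucc_lt _ _ (by simp [Fin.lt_def, j.isLt])]
        simp
    rw [he, hmm]
    have : (-1 : ℝ) ^ (((Fin.last k : Fin (k+1)) : ℕ) + ((Fin.last k : Fin (k+1)) : ℕ)) = 1 := by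
      rw [Fin.val_last, show k + k = 2*k by ring, pow_mul]; norm_num
    rw [this]; ring
  rw [h2m, h2e, h1e, h1m]
  have e1 : (-1 : ℝ) ^ ((Fin.last (k+1) : ℕ) + ((Fin.last (k+1) : Fin (k+2)) : ℕ)) = 1 := by
    rw [Fin.val_last, show (k+1)+(k+1) = 2*(k+1) by ring, pow_mul]; norm_num
  have e2 : (-1 : ℝ) ^ ((Fin.last (k+1) : ℕ) + (((Fin.last k).castSucc : Fin (k+2)) : ℕ)) = -1 := by
    rw [Fin.val_last, Fin.coe_castSucc, Fin.val_last, show (k+1)+k = 2*k+1 by ring,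
      pow_succ, pow_mul]; norm_num
  rw [e1, e2]; ring

lemma det_Q0 (N : ℕ) (d : ℝ) : (Qmat N d 0).det = 1 := Matrix.det_fin_zero

lemma det_Q1 (N : ℕ) (d : ℝ) : (Qmat N d 1).det = 2 * d := by
  rw [Matrix.det_fin_one]
  simp [Qmat]


/-- Closed-form determinantal solution of the odd-parity QES recurrences. -/
theorem odd_parity_QES_closed_form (N : ℕ) (hN : 1 ≤ N) (d : ℝ) (a : ℕ → ℝ)
    (h0 : a 0 = 0) (h1 : a 1 = 1)
    (hrec : ∀ n : ℕ, (2 * (N : ℝ) - 2 * n) * a n + 2 * d * (n + 1) * a (n + 1)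
      + (n + 1) * (n + 2) * a (n + 2) = 0) :
    ∀ k : ℕ, 1 ≤ k →
      a (k + 1) = ((-1 : ℝ) ^ k / ((Nat.factorial (k + 1) : ℝ) * (Nat.factorial k : ℝ)))
        * (Qmat N d k).det := by
  have key : ∀ k : ℕ,
      (a (k + 1) = ((-1 : ℝ) ^ k / ((Nat.factorial (k + 1) : ℝ) * (Nat.factorial k : ℝ)))
        * (Qmat N d k).det) ∧
      (a (k + 2) = ((-1 : ℝ) ^ (k+1) / ((Nat.factorial (k + 2) : ℝ) * (Nat.factorial (k+1) : ℝ)))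
        * (Qmat N d (k+1)).det) := by
    intro k
    induction k with
    | zero =>
      constructor
      · rw [det_Q0]; simp [h1, Nat.factorial]
      · have := hrec 0
        rw [h0, h1] at this
        rw [det_Q1]
        simp only [Nat.factorial] at *
        push_cast at this ⊢
        nlinarith [this]
    | succ n ih =>
      refine ⟨ih.2, ?_⟩
      have hk := ih.1
      have hk1 := ih.2
      have F0 : (0:ℝ) < (Nat.factorial n : ℝ) := by
        exact_mod_cast n.factorial_pos
      set F : ℝ := (Nat.factorial n : ℝ) with hF
      have e1 : ((Nat.factorial (n+1)):ℝ) = ((n:ℝ)+1)*F := by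
        rw [Nat.factorial_succ]; push_cast; ring
      have e2 : ((Nat.factorial (n+2)):ℝ) = ((n:ℝ)+2)*(((n:ℝ)+1)*F) := by
        rw [Nat.factorial_succ]; push_cast [e1]; ring
      have e3 : ((Nat.factorial (n+3)):ℝ) = ((n:ℝ)+3)*(((n:ℝ)+2)*(((n:ℝ)+1)*F)) := by
        rw [Nat.factorial_succ]; push_cast [e2]; ring
      have h3 := hrec (n+1)
      push_cast at h3
      have hrec2 : (Qmat N d (n+2)).det = 2*((n:ℝ)+2)*d * (Qmat N d (n+1)).det
          - 2*((N:ℝ)-((n:ℝ)+1)) * (((n:ℝ)+1)*((n:ℝ)+2)) * (Qmat N d n).det := det_Q_rec N d n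
      have ha3 : a (n+3) = -((2*(N:ℝ) - 2*((n:ℝ)+1)) * a (n+1)
          + 2*d*((n:ℝ)+2)*a (n+2)) / (((n:ℝ)+2)*((n:ℝ)+3)) := by
        have hne2 : (((n:ℝ)+2)*((n:ℝ)+3)) ≠ 0 := by positivity
        field_simp
        linear_combination h3
      show a (n+3) = ((-1 : ℝ) ^ (n+2) / ((Nat.factorial (n + 3) : ℝ)
        * (Nat.factorial (n+2) : ℝ))) * (Qmat N d (n+2)).det
      rw [ha3, hk, hk1, hrec2, e1, e2, e3]
      rw [show ((-1:ℝ))^(n+2) = (-1:ℝ)^n by rw [pow_add]; norm_num,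
        show ((-1:ℝ))^(n+1) = -(-1:ℝ)^n by rw [pow_succ]; ring]
      have hne : F ≠ 0 := ne_of_gt F0
      field_simp
      ring
  intro k _
  exact (key k).1
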